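/- For any connected closed 5-coloured graph 𝒢, any colour ℓ, and any three-element colour set c ⊂ {1,…,5} with ℓ ∈ c, one has |B_ℓ| + |E(c)| − Σ_{b∈B_ℓ} |E_b(c)| ≤ 1. -/

import Mathlib

/-- A closed `k`-coloured graph: a finite bipartite `k`-regular graph whose lines carry
colours in `Fin k`, each node meeting exactly one line of each colour.  It is encoded by a
finite node set together with, for each colour, a fixed-point-free involutive pairing
(perfect matching) exchanging the two node classes (`sign`). -/
structure ColouredGraph (k : ℕ) where
  /-- the nodes of the graph -/
  V : Type
  fintypeV : Fintype V
  /-- the bipartition of the nodes (black/white) -/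
  sign : V → Bool
  /-- `adj c v` is the node joined to `v` by the line of colour `c` at `v` -/
  adj : Fin k → V → V
  adj_invol : ∀ c, Function.Involutive (adj c)
  adj_ne : ∀ c v, adj c v ≠ v
  adj_sign : ∀ c v, sign (adj c v) = ! sign v

namespace ColouredGraph

variable {k : ℕ} (G : ColouredGraph k)

instance : Fintype G.V := G.fintypeV

/-- One step along a line whose colour lies in `S`. -/
def Step (S : Set (Fin k)) (v w : G.V) : Prop := ∃ c ∈ S, G.adj c v = w

/-- Reachability using only lines whose colours lie in `S`. -/
def Reach (S : Set (Fin k)) : G.V → G.V → Prop := Relation.ReflTransGen (G.Step S)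

/-- The connected components of the subgraph of `G` formed by the lines whose colours
lie in `S`.  For `S = {ℓ}ᶜ` these are the bubbles of colour `ℓ`; for a pair
`S = {i,j}` these are the faces of colours `(ij)` (bicoloured cycles); for a triple these
are the subgraphs dual to simplicial edges (in 4d). -/
def Component (S : Set (Fin k)) : Type := Quot (G.Reach S)

instance (S : Set (Fin k)) : Finite (G.Component S) := Quot.finite _

/-- The number of connected components of the subgraph with colours in `S`. -/
noncomputable def numComponents (S : Set (Fin k)) : ℕ := Nat.card (G.Component S)

/-- `G` is connected. -/
def Connected : Prop := ∀ v w : G.V, G.Reach Set.univ v w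

/-- The number of nodes of `G` lying in the component `b`. -/
noncomputable def nodesIn (S : Set (Fin k)) (b : G.Component S) : ℕ :=
  Nat.card {v : G.V // Quot.mk (G.Reach S) v = b}

/-- The component `x` of the subgraph with colours in `S'` lies inside the component
`b` of the subgraph with colours in `S` (intended for `S' ⊆ S`). -/
def MemIn {S S' : Set (Fin k)} (x : G.Component S') (b : G.Component S) : Prop :=
  ∃ v : G.V, Quot.mk (G.Reach S') v = x ∧ Quot.mk (G.Reach S) v = b

/-- The number of components of the subgraph with colours in `S'` contained in the
component `b` of the subgraph with colours in `S` (intended for `S' ⊆ S`). -/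
noncomputable def countIn (S S' : Set (Fin k)) (b : G.Component S) : ℕ :=
  Nat.card {x : G.Component S' // G.MemIn x b}

/-- The lines of the subgraph with colours in `S` lying in the component `b`: pairs
`(v, c)` with `c ∈ S` and `v` a node of `b`, two such pairs being identified when they
describe the same line. -/
def LineIn (S : Set (Fin k)) (b : G.Component S) : Type :=
  Quot (fun p q : {x : G.V × Fin k // x.2 ∈ S ∧ Quot.mk (G.Reach S) x.1 = b} =>
    p.1.2 = q.1.2 ∧ (q.1.1 = p.1.1 ∨ q.1.1 = G.adj p.1.2 p.1.1))

instance (S : Set (Fin k)) (b : G.Component S) : Finite (G.LineIn S b) := Quot.finite _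

/-- The number of lines of the component `b` of the subgraph with colours in `S`. -/
noncomputable def linesIn (S : Set (Fin k)) (b : G.Component S) : ℕ :=
  Nat.card (G.LineIn S b)

/-- The lines of `G`: pairs `(v, c)`, identified when describing the same line. -/
def Line : Type :=
  Quot (fun p q : G.V × Fin k =>
    p.2 = q.2 ∧ (q.1 = p.1 ∨ q.1 = G.adj p.2 p.1))

instance : Finite G.Line := Quot.finite _

/-- The number of lines of `G` (equal to `k·𝒩/2`). -/
noncomputable def numLines : ℕ := Nat.card G.Line


end ColouredGraph



open Relation

private lemma eqvGen_pair_classify {V : Type} {p q : V} {v w : V}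
    (h : EqvGen (fun a b => a = p ∧ b = q) v w) :
    v = w ∨ ((v = p ∨ v = q) ∧ (w = p ∨ w = q)) := by
  induction h with
  | rel x y hxy => exact Or.inr ⟨Or.inl hxy.1, Or.inr hxy.2⟩
  | refl x => exact Or.inl rfl
  | symm x y _ ih => tauto
  | trans x y z _ _ ih1 ih2 =>
    rcases ih1 with rfl | h1
    · exact ih2
    · rcases ih2 with rfl | h2
      · exact Or.inr h1
      · exact Or.inr ⟨h1.1, h2.2⟩

private lemma card_subtype_ne_add_one {V : Type} [Finite V] (a : V) :
    Nat.card {v : V // v ≠ a} + 1 = Nat.card V := by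
  classical
  have : Fintype V := Fintype.ofFinite V
  have h1 : Fintype.card {v : V // v ≠ a} = Fintype.card V - Fintype.card {v : V // v = a} :=
    Fintype.card_subtype_compl _
  have h2 : Fintype.card {v : V // v = a} = 1 := Fintype.card_subtype_eq a
  have h3 : 0 < Fintype.card V := Fintype.card_pos_iff.mpr ⟨a⟩
  simp only [Nat.card_eq_fintype_card]
  omega

private lemma card_le_one_add_card_rel :
    ∀ (n : ℕ) (X V : Type) (_ : Finite X) (_ : Finite V) (f g : X → V),
      Nat.card X = n →
      (∀ v w : V, EqvGen (fun a b => ∃ x, f x = a ∧ g x = b) v w) →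
      Nat.card V ≤ 1 + n := by
  intro n
  induction n using Nat.strong_induction_on with
  | _ n ih =>
    intro X V _ _ f g hX hconn
    by_cases hV : Nat.card V ≤ 1
    · omega
    -- V is nontrivial
    have hnt : Nontrivial V := by
      have : Fintype V := Fintype.ofFinite V
      rw [Nat.card_eq_fintype_card] at hV
      exact Fintype.one_lt_card_iff_nontrivial.mp (by omega)
    obtain ⟨v, w, hvw⟩ := hnt
    -- there is an edge with distinct endpoints
    have hcross : ∃ x : X, f x ≠ g x := by
      have key : ∀ a b : V, EqvGen (fun a b => ∃ x, f x = a ∧ g x = b) a b →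
          a = b ∨ ∃ x : X, f x ≠ g x := by
        intro a b h
        induction h with
        | rel a b hab =>
          obtain ⟨x, hx1, hx2⟩ := hab
          by_cases hfg : f x = g x
          · exact Or.inl (hx1 ▸ hx2 ▸ hfg)
          · exact Or.inr ⟨x, hfg⟩
        | refl a => exact Or.inl rfl
        | symm _ _ _ ih' => tauto
        | trans _ _ _ _ _ ih1 ih2 =>
          rcases ih1 with rfl | h1
          · exact ih2
          · exact Or.inr h1
      rcases key v w (hconn v w) with h | h
      · exact absurd h hvw
      · exact h
    obtain ⟨x₀, hx₀⟩ := hcross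
    set r : V → V → Prop := fun a b => a = f x₀ ∧ b = g x₀ with hr
    have : Finite (Quot r) := Quot.finite _
    -- cardinality of X'
    have hn1 : 1 ≤ n := by
      have : Nonempty X := ⟨x₀⟩
      rw [← hX]; exact Nat.card_pos
    have hX' : Nat.card {x : X // x ≠ x₀} = n - 1 := by
      have := card_subtype_ne_add_one x₀
      omega
    -- connectivity descends to the contraction
    have hdesc : ∀ a b : V, EqvGen (fun a b => ∃ x, f x = a ∧ g x = b) a b →
        EqvGen (fun a' b' => ∃ x' : {x : X // x ≠ x₀},
            Quot.mk r (f x'.1) = a' ∧ Quot.mk r (g x'.1) = b')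
          (Quot.mk r a) (Quot.mk r b) := by
      intro a b h
      induction h with
      | rel a b hab =>
        obtain ⟨x, rfl, rfl⟩ := hab
        by_cases hx : x = x₀
        · subst hx
          have heq : Quot.mk r (f x) = Quot.mk r (g x) := Quot.sound ⟨rfl, rfl⟩
          rw [heq]
          exact EqvGen.refl _
        · exact EqvGen.rel _ _ ⟨⟨x, hx⟩, rfl, rfl⟩
      | refl a => exact EqvGen.refl _
      | symm _ _ _ ih' => exact EqvGen.symm _ _ ih'
      | trans _ _ _ _ _ ih1 ih2 => exact EqvGen.trans _ _ _ ih1 ih2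
    have hconn' : ∀ v' w' : Quot r, EqvGen (fun a' b' => ∃ x' : {x : X // x ≠ x₀},
        Quot.mk r (f x'.1) = a' ∧ Quot.mk r (g x'.1) = b') v' w' := by
      intro v' w'
      obtain ⟨a, rfl⟩ := Quot.exists_rep v'
      obtain ⟨b, rfl⟩ := Quot.exists_rep w'
      exact hdesc a b (hconn a b)
    have hIH : Nat.card (Quot r) ≤ 1 + (n - 1) :=
      ih (n - 1) (by omega) _ _ inferInstance this _ _ hX' hconn'
    -- bound card V by card (Quot r) + 1
    have hinj : Function.Injective (fun v : {v : V // v ≠ g x₀} => Quot.mk r v.1) := by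
      rintro ⟨a, ha⟩ ⟨b, hb⟩ hab
      simp only at hab
      rcases eqvGen_pair_classify (Quot.eq.1 hab) with h | ⟨h1, h2⟩
      · exact Subtype.ext h
      · rcases h1 with rfl | rfl
        · rcases h2 with rfl | rfl
          · rfl
          · exact absurd rfl hb
        · exact absurd rfl ha
    have hle : Nat.card {v : V // v ≠ g x₀} ≤ Nat.card (Quot r) :=
      Nat.card_le_card_of_injective _ hinj
    have hV' := card_subtype_ne_add_one (g x₀)
    omega

open Relation

private lemma finsum_card_fiber {α β : Type} [Finite α] [Finite β] (f : α → β) :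
    ∑ᶠ b : β, Nat.card {x : α // f x = b} = Nat.card α := by
  classical
  have : Fintype α := Fintype.ofFinite α
  have : Fintype β := Fintype.ofFinite β
  rw [finsum_eq_sum_of_fintype]
  simp only [Nat.card_eq_fintype_card]
  rw [← Fintype.card_sigma]
  exact Fintype.card_congr (Equiv.sigmaFiberEquiv f)

namespace ColouredGraph
variable {k : ℕ} (G : ColouredGraph k)

private lemma reach_mono {S S' : Set (Fin k)} (h : S ⊆ S') {v w : G.V}
    (hr : G.Reach S v w) : G.Reach S' v w :=
  Relation.ReflTransGen.mono (r := G.Step S) (p := G.Step S') (fun _ _ hs => by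
    obtain ⟨c, hc, hadj⟩ := hs; exact ⟨c, h hc, hadj⟩) _ _ hr

/-- The map sending a component for colours `S` to the component for colours `S' ⊇ S`
containing it. -/
private def compMap {S S' : Set (Fin k)} (h : S ⊆ S') :
    G.Component S → G.Component S' :=
  Quot.lift (Quot.mk _) fun _ _ hab => Quot.sound (G.reach_mono h hab)

private lemma memIn_iff {S S' : Set (Fin k)} (h : S' ⊆ S) (x : G.Component S')
    (b : G.Component S) : G.MemIn x b ↔ G.compMap h x = b := by
  constructor
  · rintro ⟨v, rfl, rfl⟩; rfl
  · rintro rfl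
    obtain ⟨v, rfl⟩ := Quot.exists_rep x
    exact ⟨v, rfl, rfl⟩

private lemma countIn_eq {S S' : Set (Fin k)} (h : S' ⊆ S) (b : G.Component S) :
    G.countIn S S' b = Nat.card {x : G.Component S' // G.compMap h x = b} :=
  Nat.card_congr (Equiv.subtypeEquivRight fun x => G.memIn_iff h x b)

end ColouredGraph

open ColouredGraph in
theorem bubble_edge_inequality_4dX (G : ColouredGraph 5) (hG : G.Connected)
    (ℓ : Fin 5) (c : Finset (Fin 5)) (hc : c.card = 3) (hℓ : ℓ ∈ c) :
    G.numComponents {ℓ}ᶜ + G.numComponents ↑c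
      ≤ 1 + ∑ᶠ b : G.Component {ℓ}ᶜ, G.countIn {ℓ}ᶜ ↑(c.erase ℓ) b := by
  classical
  set S : Set (Fin 5) := {ℓ}ᶜ with hS
  set T : Set (Fin 5) := ↑c with hT
  set T' : Set (Fin 5) := ↑(c.erase ℓ) with hT'
  have hT'S : T' ⊆ S := by
    intro a ha
    simp only [hT', Finset.coe_erase, Set.mem_diff, Finset.mem_coe,
      Set.mem_singleton_iff] at ha
    simpa [hS] using ha.2
  have hT'T : T' ⊆ T := by
    intro a ha
    simp only [hT', Finset.coe_erase, Set.mem_diff, Finset.mem_coe] at ha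
    simpa [hT] using ha.1
  set β : G.Component T' → G.Component S := G.compMap hT'S with hβ
  set ε : G.Component T' → G.Component T := G.compMap hT'T with hε
  set W : Type := G.Component S ⊕ G.Component T with hW
  set f : G.Component T' → W := fun x => Sum.inl (β x) with hf
  set g : G.Component T' → W := fun x => Sum.inr (ε x) with hg
  set rel : W → W → Prop := fun a b => ∃ x, f x = a ∧ g x = b with hrel
  have K1 : ∀ v : G.V,
      rel (Sum.inl (Quot.mk (G.Reach S) v)) (Sum.inr (Quot.mk (G.Reach T) v)) :=
    fun v => ⟨Quot.mk _ v, rfl, rfl⟩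
  have K2 : ∀ v w : G.V, G.Reach Set.univ v w →
      EqvGen rel (Sum.inl (Quot.mk (G.Reach S) v))
        (Sum.inl (Quot.mk (G.Reach S) w)) := by
    intro v w h
    induction h with
    | refl => exact EqvGen.refl _
    | @tail u x h1 hstep ih =>
      obtain ⟨c', -, hadj⟩ := hstep
      by_cases hcl : c' = ℓ
      · have hedge : Quot.mk (G.Reach T) u = Quot.mk (G.Reach T) x :=
          Quot.sound (ReflTransGen.single ⟨c', by simp [hT, hcl, hℓ], hadj⟩)
        refine ih.trans _ _ _ ((EqvGen.rel _ _ (K1 u)).trans _ _ _ ?_)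
        rw [hedge]
        exact (EqvGen.rel _ _ (K1 x)).symm _ _
      · have hbub : Quot.mk (G.Reach S) u = Quot.mk (G.Reach S) x :=
          Quot.sound (ReflTransGen.single ⟨c', by simp [hS, hcl], hadj⟩)
        rw [← hbub]; exact ih
  have hconn : ∀ a b : W, EqvGen rel a b := by
    have hSrep : ∀ bb : G.Component S, ∃ v : G.V,
        Sum.inl (Quot.mk (G.Reach S) v) = (Sum.inl bb : W) := by
      intro bb; obtain ⟨v, rfl⟩ := Quot.exists_rep bb; exact ⟨v, rfl⟩
    have hTrep : ∀ ee : G.Component T, ∃ v : G.V,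
        Sum.inr (Quot.mk (G.Reach T) v) = (Sum.inr ee : W) := by
      intro ee; obtain ⟨v, rfl⟩ := Quot.exists_rep ee; exact ⟨v, rfl⟩
    have main : ∀ v w : G.V, EqvGen rel (Sum.inl (Quot.mk (G.Reach S) v))
        (Sum.inr (Quot.mk (G.Reach T) w)) := by
      intro v w
      exact (K2 v w (hG v w)).trans _ _ _ (EqvGen.rel _ _ (K1 w))
    rintro (b1 | e1) (b2 | e2)
    · obtain ⟨v, hv⟩ := hSrep b1; obtain ⟨w, hw⟩ := hSrep b2
      rw [← hv, ← hw]; exact K2 v w (hG v w)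
    · obtain ⟨v, hv⟩ := hSrep b1; obtain ⟨w, hw⟩ := hTrep e2
      rw [← hv, ← hw]; exact main v w
    · obtain ⟨v, hv⟩ := hTrep e1; obtain ⟨w, hw⟩ := hSrep b2
      rw [← hv, ← hw]; exact ((main w v).symm _ _)
    · obtain ⟨v, hv⟩ := hTrep e1; obtain ⟨w, hw⟩ := hTrep e2
      rw [← hv, ← hw]
      exact ((main v v).symm _ _).trans _ _ _ (main v w)
  have hbound := card_le_one_add_card_rel (Nat.card (G.Component T'))
    (G.Component T') W inferInstance inferInstance f g rfl hconn
  have hcardW : Nat.card W = G.numComponents S + G.numComponents T := by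
    rw [hW, Nat.card_sum]; rfl
  have hsum : ∑ᶠ b : G.Component S, G.countIn S T' b = Nat.card (G.Component T') := by
    rw [finsum_congr fun b => G.countIn_eq hT'S b]
    exact finsum_card_fiber β
  rw [hsum]
  omega


open ColouredGraph in
/-- for any connected closed 5-coloured graph `𝒢`, any colour `ℓ`, and any
three-element colour set `c ⊆ {1,…,5}` with `ℓ ∈ c`, one has
`|B_ℓ| + |E(c)| − Σ_{b∈B_ℓ} |E_b(c)| ≤ 1`.  Here `B_ℓ` is the set of bubbles of colour
`ℓ`, `E(c)` the set of components of the subgraph of `𝒢` with colours in `c` (dual to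
the simplicial edges of colour `c`), and `E_b(c)` the set of faces of the bubble `b` with
colour pair `c ∖ {ℓ}`. -/
theorem bubble_edge_inequality_4d (G : ColouredGraph 5) (hG : G.Connected)
    (ℓ : Fin 5) (c : Finset (Fin 5)) (hc : c.card = 3) (hℓ : ℓ ∈ c) :
    G.numComponents {ℓ}ᶜ + G.numComponents ↑c
      ≤ 1 + ∑ᶠ b : G.Component {ℓ}ᶜ, G.countIn {ℓ}ᶜ ↑(c.erase ℓ) b :=
  bubble_edge_inequality_4dX G hG ℓ c hc hℓ
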